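/- Let u, v, w ∈ ℝ^N be nonzero vectors, set φ_{abc} = u_a·v_b·w_c, and set D = λ_d + λ_p·N·(α₁+α₂+α₃) + λ_t·N^{3/2}. Then φ satisfies the field equations if and only if λ₂ + (D/N³)·|u|²·|v|²·|w|² = 0; in particular, if D ≠ 0, this holds if and only if |u|²·|v|²·|w|² = −λ₂·N³/D. -/

import Mathlib

open Finset

/-- The potential of the quartic `O(N)^3` tensor model. -/
noncomputable def potV (N : ℕ) (l2 ld lp lt a1 a2 a3 : ℝ)
    (φ : Fin N → Fin N → Fin N → ℝ) : ℝ :=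
  l2 / 2 * (∑ a, ∑ b, ∑ c, (φ a b c) ^ 2)
  + ld / (4 * (N : ℝ) ^ 3) * (∑ a, ∑ b, ∑ c, (φ a b c) ^ 2) ^ 2
  + lp / (4 * (N : ℝ) ^ 2) *
      (a1 * ∑ a, ∑ b, ∑ c, ∑ a', ∑ b', ∑ c',
          φ a b c * φ a b' c' * φ a' b' c' * φ a' b c
       + a2 * ∑ a, ∑ b, ∑ c, ∑ a', ∑ b', ∑ c',
          φ a b c * φ a' b c' * φ a' b' c' * φ a b' c
       + a3 * ∑ a, ∑ b, ∑ c, ∑ a', ∑ b', ∑ c',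
          φ a b c * φ a' b' c * φ a' b' c' * φ a b c')
  + lt / (4 * (N : ℝ) ^ ((3 : ℝ) / 2)) *
      ∑ a, ∑ b, ∑ c, ∑ a', ∑ b', ∑ c',
        φ a b c * φ a b' c' * φ a' b c' * φ a' b' c

/-- The field equations of the quartic `O(N)^3` tensor model (vanishing gradient of `potV`). -/
def FieldEqs (N : ℕ) (l2 ld lp lt a1 a2 a3 : ℝ)
    (φ : Fin N → Fin N → Fin N → ℝ) : Prop :=
  ∀ a b c,
    l2 * φ a b c
    + ld / (N : ℝ) ^ 3 * (∑ a', ∑ b', ∑ c', (φ a' b' c') ^ 2) * φ a b c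
    + lp / (N : ℝ) ^ 2 *
        (a1 * ∑ a', ∑ b', ∑ c', φ a b' c' * φ a' b' c' * φ a' b c
         + a2 * ∑ a', ∑ b', ∑ c', φ a' b c' * φ a' b' c' * φ a b' c
         + a3 * ∑ a', ∑ b', ∑ c', φ a' b' c * φ a' b' c' * φ a b c')
    + lt / (N : ℝ) ^ ((3 : ℝ) / 2) *
        ∑ a', ∑ b', ∑ c', φ a b' c' * φ a' b c' * φ a' b' c = 0

lemma tripSum {N : ℕ} (f g h : Fin N → ℝ) :
    ∑ a, ∑ b, ∑ c, f a * g b * h c = (∑ a, f a) * (∑ b, g b) * (∑ c, h c) := by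
  rw [Finset.sum_mul_sum, Finset.sum_mul]
  refine Finset.sum_congr rfl fun a _ => ?_
  rw [Finset.sum_mul]
  refine Finset.sum_congr rfl fun b _ => ?_
  rw [Finset.mul_sum]

lemma tripSumK {N : ℕ} (f g h : Fin N → ℝ) (K : ℝ) :
    ∑ a, ∑ b, ∑ c, f a * g b * (h c * K)
      = (∑ a, f a) * (∑ b, g b) * (∑ c, h c) * K := by
  rw [tripSum f g (fun c => h c * K), ← Finset.sum_mul]
  ring

/-- The rank-one ansatz `φ_{abc} = u_a v_b w_c` (stabilizer `O(N-1)³`) solves the field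
equations iff `λ₂ + (D/N³)|u|²|v|²|w|² = 0`, where
`D = λ_d + λ_p N(α₁+α₂+α₃) + λ_t N^{3/2}`; for `D ≠ 0`, iff `|u|²|v|²|w|² = -λ₂N³/D`. -/
theorem rank_one_solution (N : ℕ) (hN : 1 ≤ N)
    (l2 ld lp lt a1 a2 a3 : ℝ)
    (u v w : Fin N → ℝ) (hu : u ≠ 0) (hv : v ≠ 0) (hw : w ≠ 0)
    (φ : Fin N → Fin N → Fin N → ℝ) (hφ : φ = fun a b c => u a * v b * w c)
    (D : ℝ)
    (hD : D = ld + lp * (N : ℝ) * (a1 + a2 + a3) + lt * (N : ℝ) ^ ((3 : ℝ) / 2)) :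
    (FieldEqs N l2 ld lp lt a1 a2 a3 φ ↔
      l2 + D / (N : ℝ) ^ 3 *
        ((∑ a, (u a) ^ 2) * (∑ b, (v b) ^ 2) * (∑ c, (w c) ^ 2)) = 0)
    ∧ (D ≠ 0 →
        (FieldEqs N l2 ld lp lt a1 a2 a3 φ ↔
          (∑ a, (u a) ^ 2) * (∑ b, (v b) ^ 2) * (∑ c, (w c) ^ 2)
            = -l2 * (N : ℝ) ^ 3 / D)) := by
  subst hφ
  have hNpos : (0:ℝ) < (N:ℝ) := by exact_mod_cast hN
  have hNne : (N:ℝ) ≠ 0 := ne_of_gt hNpos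
  have hN3 : (N:ℝ)^3 ≠ 0 := pow_ne_zero _ hNne
  have ht : (N:ℝ)^((3:ℝ)/2) * (N:ℝ)^((3:ℝ)/2) = (N:ℝ)^3 := by
    rw [← Real.rpow_add hNpos, ← Real.rpow_natCast (N:ℝ) 3]
    norm_num
  have htne : (N:ℝ)^((3:ℝ)/2) ≠ 0 := ne_of_gt (Real.rpow_pos_of_pos hNpos _)
  set U := ∑ a, (u a)^2 with hU
  set V := ∑ b, (v b)^2 with hV
  set W := ∑ c, (w c)^2 with hW
  have key : ∀ a b c,
      l2 * (u a * v b * w c)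
      + ld / (N : ℝ) ^ 3 * (∑ a', ∑ b', ∑ c', (u a' * v b' * w c') ^ 2) * (u a * v b * w c)
      + lp / (N : ℝ) ^ 2 *
          (a1 * ∑ a', ∑ b', ∑ c', (u a * v b' * w c') * (u a' * v b' * w c') * (u a' * v b * w c)
           + a2 * ∑ a', ∑ b', ∑ c', (u a' * v b * w c') * (u a' * v b' * w c') * (u a * v b' * w c)
           + a3 * ∑ a', ∑ b', ∑ c', (u a' * v b' * w c) * (u a' * v b' * w c') * (u a * v b * w c'))
      + lt / (N : ℝ) ^ ((3 : ℝ) / 2) *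
          ∑ a', ∑ b', ∑ c', (u a * v b' * w c') * (u a' * v b * w c') * (u a' * v b' * w c)
      = (l2 + D / (N : ℝ) ^ 3 * (U * V * W)) * (u a * v b * w c) := by
    intro a b c
    have e0 : ∑ a', ∑ b', ∑ c', (u a' * v b' * w c') ^ 2 = U * V * W := by
      rw [← tripSum (fun x => u x ^ 2) (fun x => v x ^ 2) (fun x => w x ^ 2)]
      exact Finset.sum_congr rfl fun _ _ => Finset.sum_congr rfl fun _ _ =>
        Finset.sum_congr rfl fun _ _ => by ring
    have e1 : ∑ a', ∑ b', ∑ c', (u a * v b' * w c') * (u a' * v b' * w c') * (u a' * v b * w c)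
        = U * V * W * (u a * v b * w c) := by
      rw [← tripSumK (fun x => u x ^ 2) (fun x => v x ^ 2) (fun x => w x ^ 2) (u a * v b * w c)]
      exact Finset.sum_congr rfl fun _ _ => Finset.sum_congr rfl fun _ _ =>
        Finset.sum_congr rfl fun _ _ => by ring
    have e2 : ∑ a', ∑ b', ∑ c', (u a' * v b * w c') * (u a' * v b' * w c') * (u a * v b' * w c)
        = U * V * W * (u a * v b * w c) := by
      rw [← tripSumK (fun x => u x ^ 2) (fun x => v x ^ 2) (fun x => w x ^ 2) (u a * v b * w c)]
      exact Finset.sum_congr rfl fun _ _ => Finset.sum_congr rfl fun _ _ =>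
        Finset.sum_congr rfl fun _ _ => by ring
    have e3 : ∑ a', ∑ b', ∑ c', (u a' * v b' * w c) * (u a' * v b' * w c') * (u a * v b * w c')
        = U * V * W * (u a * v b * w c) := by
      rw [← tripSumK (fun x => u x ^ 2) (fun x => v x ^ 2) (fun x => w x ^ 2) (u a * v b * w c)]
      exact Finset.sum_congr rfl fun _ _ => Finset.sum_congr rfl fun _ _ =>
        Finset.sum_congr rfl fun _ _ => by ring
    have e4 : ∑ a', ∑ b', ∑ c', (u a * v b' * w c') * (u a' * v b * w c') * (u a' * v b' * w c)
        = U * V * W * (u a * v b * w c) := by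
      rw [← tripSumK (fun x => u x ^ 2) (fun x => v x ^ 2) (fun x => w x ^ 2) (u a * v b * w c)]
      exact Finset.sum_congr rfl fun _ _ => Finset.sum_congr rfl fun _ _ =>
        Finset.sum_congr rfl fun _ _ => by ring
    rw [e0, e1, e2, e3, e4, hD]
    simp only [← ht]
    field_simp
    linear_combination (u a * v b * w c * U * V * W * lp *
      (a1 + a2 + a3)) * ht
  obtain ⟨a₀, ha₀⟩ := Function.ne_iff.mp hu
  obtain ⟨b₀, hb₀⟩ := Function.ne_iff.mp hv
  obtain ⟨c₀, hc₀⟩ := Function.ne_iff.mp hw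
  have ha₀' : u a₀ ≠ 0 := by simpa using ha₀
  have hb₀' : v b₀ ≠ 0 := by simpa using hb₀
  have hc₀' : w c₀ ≠ 0 := by simpa using hc₀
  have hKne : u a₀ * v b₀ * w c₀ ≠ 0 := mul_ne_zero (mul_ne_zero ha₀' hb₀') hc₀'
  have h1 : FieldEqs N l2 ld lp lt a1 a2 a3 (fun a b c => u a * v b * w c) ↔
      l2 + D / (N : ℝ) ^ 3 * (U * V * W) = 0 := by
    constructor
    · intro hF
      have h := hF a₀ b₀ c₀
      simp only at h
      rw [key a₀ b₀ c₀] at h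
      exact (mul_eq_zero.mp h).resolve_right hKne
    · intro hE
      intro a b c
      simp only
      rw [key a b c, hE, zero_mul]
  refine ⟨h1, fun hD0 => ?_⟩
  rw [h1]
  rw [eq_div_iff hD0]
  constructor
  · intro hE
    have h' : l2 * (N:ℝ)^3 + D * (U * V * W) = 0 := by
      field_simp at hE
      linarith
    linarith
  · intro hE
    have h' : D / (N:ℝ)^3 * (U * V * W) = -l2 := by
      rw [div_mul_eq_mul_div, mul_comm D, hE]
      field_simp
    linarith
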